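/- Let s and n be positive integers. If 2^{s+1} divides n, or if s ≥ 2 and 2^{s−1} divides n but 2^s does not divide n, then Φ_s(n) is even. -/

import Mathlib

/-- The generalized gcd of a nonnegative integer `n` at level `s`: the largest
`s`-th power `l ^ s` (with `l ≥ 1`) dividing `n`.  Applying it to `n = gcd(a, b)`
gives the generalized gcd `(a, b)_s` of the paper. -/
def sPowGcd (s n : ℕ) : ℕ := (Nat.findGreatest (fun l => l ^ s ∣ n) n) ^ s

/-- Klee's function `Φ_s(n)`: the number of `1 ≤ m ≤ n` with `(m, n)_s = 1`. -/
def klee (s n : ℕ) : ℕ :=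
  ((Finset.Icc 1 n).filter (fun m => sPowGcd s (Nat.gcd m n) = 1)).card

lemma sPowGcd_eq_one_iff (s k : ℕ) (hs : 0 < s) (hk : 0 < k) :
    sPowGcd s k = 1 ↔ ∀ p : ℕ, p.Prime → ¬ p ^ s ∣ k := by
  unfold sPowGcd
  constructor
  · intro h1 p hp hdvd
    have hps : p ≤ k := le_trans (Nat.le_self_pow hs.ne' p) (Nat.le_of_dvd hk hdvd)
    have hle := Nat.le_findGreatest (P := fun l => l ^ s ∣ k) hps hdvd
    have hg : Nat.findGreatest (fun l => l ^ s ∣ k) k = 1 :=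
      (pow_eq_one_iff.mp h1).resolve_right hs.ne'
    have := hp.two_le
    omega
  · intro hall
    have hg : Nat.findGreatest (fun l => l ^ s ∣ k) k = 1 := by
      have hle : Nat.findGreatest (fun l => l ^ s ∣ k) k ≤ 1 := by
        by_contra hgt
        push_neg at hgt
        set g := Nat.findGreatest (fun l => l ^ s ∣ k) k with hgdef
        have hgP : g ^ s ∣ k := Nat.findGreatest_of_ne_zero (P := fun l => l ^ s ∣ k) hgdef.symm (by omega)
        obtain ⟨p, hp, hpg⟩ := Nat.exists_prime_and_dvd (n := g) (by omega)
        exact hall p hp ((pow_dvd_pow_of_dvd hpg s).trans hgP)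
      have hge : 1 ≤ Nat.findGreatest (fun l => l ^ s ∣ k) k :=
        Nat.le_findGreatest hk (by simp)
      omega
    rw [hg, one_pow]

theorem stmt_13 (s n : ℕ) (hs : 0 < s) (hn : 0 < n)
    (h : 2 ^ (s + 1) ∣ n ∨ (2 ≤ s ∧ 2 ^ (s - 1) ∣ n ∧ ¬ 2 ^ s ∣ n)) :
    Even (klee s n) := by
  have h2n : 2 ∣ n := by
    rcases h with h1 | ⟨hs2, h1, _⟩
    · exact dvd_trans (dvd_pow_self 2 (by omega)) h1
    · exact dvd_trans (dvd_pow_self 2 (by omega)) h1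
  set t := n / 2 with htdef
  have hnt : n = 2 * t := by omega
  have ht : 0 < t := by omega
  have key : ∀ p : ℕ, p.Prime → p ^ s ∣ n → p ^ s ∣ t := by
    intro p hp hpn
    by_cases hp2 : p = 2
    · subst hp2
      rcases h with h1 | ⟨hs2, h1, h2⟩
      · obtain ⟨k, hk⟩ := h1
        refine ⟨k, ?_⟩
        have : n = 2 * (2 ^ s * k) := by rw [hk]; ring
        omega
      · exact absurd hpn h2
    · have hcop : Nat.Coprime (p ^ s) 2 :=
        ((Nat.coprime_primes hp Nat.prime_two).mpr hp2).pow_left s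
      rw [hnt] at hpn
      exact Nat.Coprime.dvd_of_dvd_mul_left hcop hpn
  have hQiff : ∀ m : ℕ, sPowGcd s (Nat.gcd m n) = 1 ↔
      ∀ p : ℕ, p.Prime → p ^ s ∣ n → ¬ p ^ s ∣ m := by
    intro m
    rw [sPowGcd_eq_one_iff s (Nat.gcd m n) hs (Nat.gcd_pos_of_pos_right m hn)]
    constructor
    · intro hall p hp hpn hpm
      exact hall p hp (Nat.dvd_gcd hpm hpn)
    · intro hall p hp hpg
      exact hall p hp (hpg.trans (Nat.gcd_dvd_right m n)) (hpg.trans (Nat.gcd_dvd_left m n))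
  have hQshift : ∀ m : ℕ, (sPowGcd s (Nat.gcd m n) = 1) ↔
      (sPowGcd s (Nat.gcd (m + t) n) = 1) := by
    intro m
    rw [hQiff, hQiff]
    refine forall_congr' fun p => imp_congr_right fun hp => imp_congr_right fun hpn => ?_
    have hpt := key p hp hpn
    constructor
    · intro hm hmt
      have : p ^ s ∣ (m + t) - t := Nat.dvd_sub hmt hpt
      simpa using hm (by simpa using this)
    · intro hmt hm
      exact hmt (Nat.dvd_add hm hpt)
  unfold klee
  have hsplit : Finset.Icc 1 n = Finset.Icc 1 t ∪ Finset.Icc (t + 1) n := by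
    ext x
    simp only [Finset.mem_Icc, Finset.mem_union]
    omega
  have hdisj : Disjoint ((Finset.Icc 1 t).filter (fun m => sPowGcd s (Nat.gcd m n) = 1))
      ((Finset.Icc (t + 1) n).filter (fun m => sPowGcd s (Nat.gcd m n) = 1)) := by
    refine Finset.disjoint_filter_filter ?_
    rw [Finset.disjoint_left]
    intro a ha hb
    simp only [Finset.mem_Icc] at ha hb
    omega
  rw [hsplit, Finset.filter_union, Finset.card_union_of_disjoint hdisj]
  have hcard : ((Finset.Icc 1 t).filter (fun m => sPowGcd s (Nat.gcd m n) = 1)).card =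
      ((Finset.Icc (t + 1) n).filter (fun m => sPowGcd s (Nat.gcd m n) = 1)).card := by
    refine Finset.card_bij (fun m _ => m + t) ?_ ?_ ?_
    · intro a ha
      simp only [Finset.mem_filter, Finset.mem_Icc] at ha ⊢
      refine ⟨⟨by omega, by omega⟩, (hQshift a).mp ha.2⟩
    · intro a _ b _ hab
      have h' : a + t = b + t := hab
      omega
    · intro b hb
      simp only [Finset.mem_filter, Finset.mem_Icc] at hb
      refine ⟨b - t, ?_, by show b - t + t = b; omega⟩
      simp only [Finset.mem_filter, Finset.mem_Icc]
      refine ⟨⟨by omega, by omega⟩, ?_⟩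
      rw [hQshift (b - t)]
      have : b - t + t = b := by omega
      rw [this]
      exact hb.2
  rw [hcard]
  exact Even.add_self _
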